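/- If K is a (q, k, λ)-difference set with λ odd and ℓ ≡ 0 (mod 8), then λ ≡ 1 (mod 4). -/

import Mathlib

open Finset

/-- The set of `ℓ`-th powers in `Fˣ`, viewed inside `F`. -/
def Kset (F : Type*) [Field F] (ℓ : ℕ) : Set F :=
  {x : F | ∃ y : Fˣ, x = ((y ^ ℓ : Fˣ) : F)}

/-- `H` is a difference set of `(F, +)` with parameter `lam`. -/
def IsDiffSet {F : Type*} [Field F] (H : Set F) (lam : ℕ) : Prop :=
  ∀ z : F, z ≠ 0 →
    Nat.card {p : F × F // p.1 ∈ H ∧ p.2 ∈ H ∧ p.1 - p.2 = z} = lam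

/-- odd squares are 1 mod 8 -/
lemma aux_int_odd_sq {x : ℤ} (h : Odd x) : (8:ℤ) ∣ x^2 - 1 := by
  obtain ⟨m, rfl⟩ := h
  obtain ⟨t, ht⟩ := (Int.even_mul_succ_self m).two_dvd
  exact ⟨t, by nlinarith [ht]⟩

/-- the subgroup of `ℓ`-th powers in `Fˣ` -/
def Hsub (F : Type*) [Field F] (ℓ : ℕ) : Subgroup Fˣ := (powMonoidHom ℓ : Fˣ →* Fˣ).range

lemma coe_mem_Kset_iff {F : Type*} [Field F] {ℓ : ℕ} {u : Fˣ} :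
    ((u : F) ∈ Kset F ℓ) ↔ u ∈ Hsub F ℓ := by
  constructor
  · rintro ⟨y, hy⟩
    exact ⟨y, Units.ext hy.symm⟩
  · rintro ⟨y, rfl⟩
    exact ⟨y, rfl⟩

lemma zero_not_mem_Kset {F : Type*} [Field F] {ℓ : ℕ} : (0:F) ∉ Kset F ℓ := by
  rintro ⟨y, hy⟩
  exact Units.ne_zero _ hy.symm

open scoped Classical in
/-- a unit out of a field element -/
noncomputable def mkU {F : Type*} [Field F] (a : F) : Fˣ :=
  if h : a = 0 then 1 else Units.mk0 a h

lemma mkU_coe {F : Type*} [Field F] {a : F} (h : a ≠ 0) : ((mkU a : Fˣ) : F) = a := by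
  simp [mkU, h]

lemma mkU_unit {F : Type*} [Field F] (u : Fˣ) : mkU ((u : F)) = u := by
  apply Units.ext
  rw [mkU_coe (Units.ne_zero u)]

theorem diffSet_odd_lambda_mod_four {F : Type*} [Field F] [Fintype F] (ℓ : ℕ)
    (hodd : Odd (Fintype.card F)) (hℓ : ℓ ∣ Fintype.card F - 1)
    (k : ℕ) (hk : k = (Fintype.card F - 1) / ℓ)
    (lam : ℕ) (hlam : lam = (k - 1) / ℓ)
    (hds : IsDiffSet (Kset F ℓ) lam)
    (hlamodd : Odd lam) (h8 : 8 ∣ ℓ) :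
    lam % 4 = 1 := by
  classical
  -- basic setup
  have hq1 : 1 < Fintype.card F := Fintype.one_lt_card
  have hℓ0 : ℓ ≠ 0 := by
    rintro rfl
    rw [zero_dvd_iff] at hℓ
    omega
  have hℓ8 : 8 ≤ ℓ := Nat.le_of_dvd (Nat.pos_of_ne_zero hℓ0) h8
  have hchar : ringChar F ≠ 2 := by
    intro h
    have := FiniteField.even_card_iff_char_two.mp h
    rw [Nat.odd_iff] at hodd
    omega
  have h2F : (2:F) ≠ 0 := Ring.two_ne_zero hchar
  have hneg1F : (-1 : F) ≠ 1 := Ring.neg_one_ne_one_of_char_ne_two hchar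
  -- the subgroup of ℓ-th powers and its cardinality
  obtain ⟨g, hg⟩ := IsCyclic.exists_generator (α := Fˣ)
  have hHz : Hsub F ℓ = Subgroup.zpowers (g ^ ℓ) := by
    apply le_antisymm
    · rintro x hx
      obtain ⟨y, rfl⟩ := MonoidHom.mem_range.mp hx
      obtain ⟨m, rfl⟩ := Subgroup.mem_zpowers_iff.mp (hg y)
      refine Subgroup.mem_zpowers_iff.mpr ⟨m, ?_⟩
      show (g ^ ℓ) ^ m = (g ^ m) ^ ℓ
      group
    · rintro x hx
      obtain ⟨m, rfl⟩ := Subgroup.mem_zpowers_iff.mp hx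
      refine MonoidHom.mem_range.mpr ⟨g ^ m, ?_⟩
      show (g ^ m) ^ ℓ = (g ^ ℓ) ^ m
      group
  have hκℓ : Nat.card (Hsub F ℓ) * ℓ = Fintype.card F - 1 := by
    have horder : orderOf g = Fintype.card F - 1 := by
      rw [orderOf_eq_card_of_forall_mem_zpowers hg, Nat.card_eq_fintype_card,
        Fintype.card_units]
    have h1 : Nat.card (Hsub F ℓ) = (Fintype.card F - 1) / ℓ := by
      rw [hHz, Nat.card_zpowers, orderOf_pow, horder, Nat.gcd_eq_right hℓ]
    rw [h1, Nat.div_mul_cancel hℓ]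
  -- finset versions
  set Ku : Finset Fˣ := univ.filter (· ∈ Hsub F ℓ) with hKu
  have hKucard : Ku.card = Nat.card (Hsub F ℓ) := by
    rw [Nat.card_eq_fintype_card, Fintype.card_subtype]
  have h1Ku : (1:Fˣ) ∈ Ku := by
    simp [hKu, Subgroup.one_mem]
  have hKupos : 0 < Ku.card := card_pos.mpr ⟨1, h1Ku⟩
  set KuF : Finset F := univ.filter (· ∈ Kset F ℓ) with hKuF
  have hKuFcard : KuF.card = Ku.card := by
    apply (Finset.card_bij (fun (x : Fˣ) (_ : x ∈ Ku) => (x : F)) ?_ ?_ ?_).symm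
    · intro a ha
      simp only [hKu, mem_filter, mem_univ, true_and] at ha
      simp only [hKuF, mem_filter, mem_univ, true_and]
      exact coe_mem_Kset_iff.mpr ha
    · intro a _ b _ h
      exact Units.ext h
    · intro b hb
      simp only [hKuF, mem_filter, mem_univ, true_and] at hb
      obtain ⟨y, rfl⟩ := hb
      refine ⟨y ^ ℓ, ?_, rfl⟩
      simp only [hKu, mem_filter, mem_univ, true_and]
      exact ⟨y, rfl⟩
  -- the difference-set counts as finset cards
  have hPair : ∀ z : F, z ≠ 0 →
      (univ.filter (fun p : F × F => p.1 ∈ Kset F ℓ ∧ p.2 ∈ Kset F ℓ ∧ p.1 - p.2 = z)).card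
        = lam := by
    intro z hz
    rw [← hds z hz, Nat.card_eq_fintype_card, Fintype.card_subtype]
  -- double counting: κ * (κ - 1) = (q-1) * lam
  have hdouble : KuF.card * KuF.card - KuF.card = (Fintype.card F - 1) * lam := by
    have h1 : KuF.offDiag.card = ∑ z ∈ univ.erase (0:F),
        (KuF.offDiag.filter (fun p => p.1 - p.2 = z)).card := by
      apply card_eq_sum_card_fiberwise
      intro p hp
      rw [mem_coe, mem_offDiag] at hp
      exact mem_erase.mpr ⟨sub_ne_zero.mpr hp.2.2, mem_univ _⟩
    have h2 : ∀ z ∈ univ.erase (0:F),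
        (KuF.offDiag.filter (fun p => p.1 - p.2 = z)).card = lam := by
      intro z hz
      rw [mem_erase] at hz
      rw [← hPair z hz.1]
      congr 1
      ext p
      simp only [mem_filter, mem_offDiag, mem_univ, true_and, hKuF, mem_filter]
      constructor
      · rintro ⟨⟨h1', h2', h3'⟩, h4'⟩
        exact ⟨h1', h2', h4'⟩
      · rintro ⟨h1', h2', h4'⟩
        exact ⟨⟨h1', h2', fun h => hz.1 (by rw [← h4', h, sub_self])⟩, h4'⟩
    rw [Finset.offDiag_card] at h1
    rw [h1, Finset.sum_congr rfl h2, Finset.sum_const, smul_eq_mul,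
      card_erase_of_mem (mem_univ 0), card_univ]
  -- κ = ℓ * lam + 1
  have hκlam : Ku.card = ℓ * lam + 1 := by
    have e1 := hdouble
    rw [hKuFcard, ← hκℓ, ← hKucard] at e1
    have hle : Ku.card ≤ Ku.card * Ku.card := Nat.le_mul_of_pos_left _ hKupos
    zify [hle] at e1
    have hcast : (Ku.card : ℤ) * ((Ku.card : ℤ) - 1) = (Ku.card : ℤ) * ((ℓ:ℤ) * lam) := by
      linarith [e1]
    have h2 := mul_left_cancel₀ (a := (Ku.card : ℤ)) (by exact_mod_cast hKupos.ne') hcast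
    have h3 : (Ku.card : ℤ) = (ℓ:ℤ) * lam + 1 := by linarith
    exact_mod_cast h3
  -- -1 is not an ℓ-th power
  have hκodd : Ku.card % 2 = 1 := by
    obtain ⟨l', hl'⟩ := h8
    have : Ku.card = 2*(4*(l'*lam)) + 1 := by rw [hκlam, hl']; ring
    omega
  have hnegH : (-1 : Fˣ) ∉ Hsub F ℓ := by
    intro hmem
    have hne : (-1 : Fˣ) ≠ 1 := by
      intro h
      apply hneg1F
      calc (-1 : F) = ((-1 : Fˣ) : F) := by simp
        _ = ((1 : Fˣ) : F) := by rw [h]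
        _ = 1 := by simp
    have hsq : (⟨-1, hmem⟩ : Hsub F ℓ) ^ 2 = 1 := by
      ext
      simp
    have ho : orderOf (⟨-1, hmem⟩ : Hsub F ℓ) = 2 :=
      orderOf_eq_prime hsq (by simpa [Subtype.ext_iff] using hne)
    have hdvd := orderOf_dvd_natCard (⟨-1, hmem⟩ : Hsub F ℓ)
    rw [ho, ← hKucard] at hdvd
    omega
  have haddne : ∀ x : Fˣ, x ∈ Hsub F ℓ → ((x : F) + 1) ≠ 0 := by
    intro x hx h
    apply hnegH
    have hx1 : (x : F) = ((-1 : Fˣ) : F) := by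
      simp only [Units.val_neg, Units.val_one]
      exact eq_neg_of_add_eq_zero_left h
    rwa [Units.ext hx1] at hx
    -- quotient group setup
  haveI : Fintype (Fˣ ⧸ Hsub F ℓ) := Fintype.ofFinite _
  set π : Fˣ →* Fˣ ⧸ Hsub F ℓ := QuotientGroup.mk' (Hsub F ℓ) with hπdef
  have hπ1 : ∀ x : Fˣ, π x = 1 ↔ x ∈ Hsub F ℓ := fun x => QuotientGroup.eq_one_iff x
  have hQcard : Fintype.card (Fˣ ⧸ Hsub F ℓ) = ℓ := by
    have h1 : Nat.card Fˣ = Nat.card (Fˣ ⧸ Hsub F ℓ) * Nat.card (Hsub F ℓ) :=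
      Subgroup.card_eq_card_quotient_mul_card_subgroup (Hsub F ℓ)
    have h2 : Nat.card Fˣ = Fintype.card F - 1 := by
      rw [Nat.card_eq_fintype_card, Fintype.card_units]
    have h3 : Nat.card (Fˣ ⧸ Hsub F ℓ) = Fintype.card (Fˣ ⧸ Hsub F ℓ) :=
      Nat.card_eq_fintype_card
    rw [h2, h3, ← hKucard] at h1
    have h5 : ℓ * Ku.card = Fintype.card F - 1 := by rw [mul_comm, hKucard]; exact hκℓ
    exact Nat.eq_of_mul_eq_mul_right hKupos (h1.symm.trans h5.symm)
  set mQ : F → Fˣ ⧸ Hsub F ℓ := fun a => π (mkU a) with hmQdef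
  set B : (Fˣ ⧸ Hsub F ℓ) → ℕ :=
    fun c => (Ku.filter (fun x : Fˣ => mQ ((x:F)+1) = c)).card with hBdef
  have hKuH : ∀ x : Fˣ, x ∈ Ku ↔ x ∈ Hsub F ℓ := by
    intro x; simp [hKu]
  -- coset invariance under x ↦ x⁻¹
  have hmQinv : ∀ x : Fˣ, x ∈ Hsub F ℓ → mQ (((x⁻¹ : Fˣ) : F) + 1) = mQ ((x : F) + 1) := by
    intro x hx
    have hxinv : x⁻¹ ∈ Hsub F ℓ := inv_mem hx
    have hne1 : ((x : F) + 1) ≠ 0 := haddne x hx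
    have hne2 : (((x⁻¹ : Fˣ) : F) + 1) ≠ 0 := haddne x⁻¹ hxinv
    have hunit : mkU (((x⁻¹ : Fˣ) : F) + 1) = mkU ((x : F) + 1) * x⁻¹ := by
      apply Units.ext
      rw [mkU_coe hne2, Units.val_mul, mkU_coe hne1, Units.val_inv_eq_inv_val]
      field_simp
      ring
    show π (mkU (((x⁻¹ : Fˣ) : F) + 1)) = π (mkU ((x : F) + 1))
    rw [hunit, map_mul, map_inv, (hπ1 x).mpr hx, inv_one]
    exact mul_one (π (mkU ((x:F) + 1)))
  -- parity of B c when c is not the coset of 2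
  have hBeven' : ∀ c : Fˣ ⧸ Hsub F ℓ, mQ 2 ≠ c → 2 ∣ B c := by
    intro c hc
    set s : Finset Fˣ := Ku.filter (fun x : Fˣ => mQ ((x:F)+1) = c) with hs
    have hsum0 : ∑ _x ∈ s, (1 : ZMod 2) = 0 := by
      apply Finset.sum_involution (fun a _ => a⁻¹)
      · intro a _; decide
      · intro a ha _
        intro heq
        have hmem := (mem_filter.mp ha)
        have haH : a ∈ Hsub F ℓ := (hKuH a).mp hmem.1
        have hun : a * a = 1 := by
          nth_rewrite 2 [← heq]
          exact mul_inv_cancel a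
        have : (a : F) * (a : F) = 1 := by
          have h2 := congrArg (Units.val) hun
          rwa [Units.val_mul, Units.val_one] at h2
        rcases mul_self_eq_one_iff.mp this with h1 | h1
        · have ha1 : a = 1 := Units.ext (by rw [h1, Units.val_one])
          apply hc
          rw [← hmem.2, ha1]
          norm_num [Units.val_one, one_add_one_eq_two]
        · have ha1 : a = -1 := Units.ext (by rw [h1]; simp)
          rw [ha1] at haH
          exact hnegH haH
      · intro a _; exact inv_inv a
      · intro a ha
        have hmem := mem_filter.mp ha
        have haH : a ∈ Hsub F ℓ := (hKuH a).mp hmem.1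
        rw [mem_filter]
        exact ⟨(hKuH _).mpr (inv_mem haH), by rw [hmQinv a haH]; exact hmem.2⟩
    have hcard0 : ((s.card : ℕ) : ZMod 2) = 0 := by
      rw [← hsum0, Finset.sum_const, nsmul_eq_mul, mul_one]
    exact (ZMod.natCast_eq_zero_iff _ 2).mp hcard0
  -- B 1 = lam
  have hB1 : B 1 = lam := by
    rw [hBdef]
    rw [← hPair 1 one_ne_zero]
    apply Finset.card_bij (fun (x : Fˣ) (_ : x ∈ _) => (((x:F) + 1), (x:F)))
    · intro a ha
      have hmem := mem_filter.mp ha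
      have haH : a ∈ Hsub F ℓ := (hKuH a).mp hmem.1
      have hne : ((a:F) + 1) ≠ 0 := haddne a haH
      have hmk : mkU ((a:F)+1) ∈ Hsub F ℓ := (hπ1 _).mp hmem.2
      rw [mem_filter]
      refine ⟨mem_univ _, ?_, ?_, by ring⟩
      · rw [← mkU_coe hne]
        exact coe_mem_Kset_iff.mpr hmk
      · exact coe_mem_Kset_iff.mpr haH
    · intro a _ b _ h
      rw [Prod.mk.injEq] at h
      exact Units.ext h.2
    · rintro ⟨p1, p2⟩ hp
      rw [mem_filter] at hp
      obtain ⟨_, hp1, hp2, hpe⟩ := hp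
      obtain ⟨y, rfl⟩ := hp2
      refine ⟨y ^ ℓ, ?_, ?_⟩
      · rw [mem_filter]
        have hH : (y^ℓ : Fˣ) ∈ Hsub F ℓ := ⟨y, rfl⟩
        refine ⟨(hKuH _).mpr hH, ?_⟩
        have he : ((y^ℓ : Fˣ) : F) + 1 = p1 := by linear_combination -hpe
        rw [he]
        have hp10 : p1 ≠ 0 := fun h => zero_not_mem_Kset (h ▸ hp1)
        have : mkU p1 ∈ Hsub F ℓ := by
          apply coe_mem_Kset_iff.mp
          rw [mkU_coe hp10]
          exact hp1
        exact (hπ1 _).mpr this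
      · rw [Prod.mk.injEq]
        exact ⟨by linear_combination -hpe, rfl⟩
  -- 2 is an ℓ-th power
  have h2K : mQ 2 = 1 := by
    by_contra hc
    have h2 := hBeven' 1 hc
    rw [hB1] at h2
    rw [Nat.odd_iff] at hlamodd
    omega
  have hBeven : ∀ c : Fˣ ⧸ Hsub F ℓ, c ≠ 1 → 2 ∣ B c := by
    intro c hc
    exact hBeven' c (by rw [h2K]; exact fun h => hc h.symm)
  -- sum of B c = κ
  have hsumB : ∑ c, B c = Ku.card :=
    (card_eq_sum_card_fiberwise (fun x _ => mem_univ _)).symm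
  -- second moment
  set T : Finset (Fˣ × Fˣ) :=
    (Ku ×ˢ Ku).filter (fun p : Fˣ × Fˣ => mQ ((p.1:F)+1) = mQ ((p.2:F)+1)) with hTdef
  have hTcard : T.card = ∑ c, B c * B c := by
    rw [card_eq_sum_card_fiberwise (f := fun p : Fˣ × Fˣ => mQ ((p.1:F)+1))
      (t := univ) (fun p _ => mem_univ _)]
    apply sum_congr rfl
    intro c _
    have hTc : T.filter (fun p : Fˣ × Fˣ => mQ ((p.1:F)+1) = c)
        = (Ku.filter (fun x : Fˣ => mQ ((x:F)+1) = c)) ×ˢ (Ku.filter (fun x : Fˣ => mQ ((x:F)+1) = c)) := by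
      ext p
      simp only [hTdef, mem_filter, mem_product]
      constructor
      · rintro ⟨⟨⟨h1, h2⟩, h3⟩, h4⟩
        exact ⟨⟨h1, h4⟩, h2, by rw [← h3]; exact h4⟩
      · rintro ⟨⟨h1, h4⟩, h2, h5⟩
        exact ⟨⟨⟨h1, h2⟩, by rw [h4, h5]⟩, h4⟩
    rw [hTc, card_product]
  -- diagonal of T
  have hTdiag : (T.filter (fun p : Fˣ × Fˣ => p.1 = p.2)).card = Ku.card := by
    apply (Finset.card_bij (fun (x : Fˣ) (_ : x ∈ Ku) => (x, x)) ?_ ?_ ?_).symm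
    · intro a ha
      rw [mem_filter, hTdef, mem_filter, mem_product]
      exact ⟨⟨⟨ha, ha⟩, rfl⟩, rfl⟩
    · intro a _ b _ h
      rw [Prod.mk.injEq] at h
      exact h.1
    · rintro ⟨p1, p2⟩ hp
      rw [mem_filter, hTdef, mem_filter, mem_product] at hp
      obtain ⟨⟨⟨h1, _⟩, _⟩, heq⟩ := hp
      exact ⟨p1, h1, by rw [Prod.mk.injEq]; exact ⟨rfl, heq⟩⟩
  -- off-diagonal of T
  have hToff : (T.filter (fun p : Fˣ × Fˣ => ¬ p.1 = p.2)).card = (Ku.card - 1) * lam := by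
    set To := T.filter (fun p : Fˣ × Fˣ => ¬ p.1 = p.2) with hTo
    -- membership characterization of fibers
    have hmemTo : ∀ p : Fˣ × Fˣ, ∀ t : Fˣ, t ∈ Ku.erase 1 →
        ((p ∈ To ∧ mkU ((p.1:F)+1) * (mkU ((p.2:F)+1))⁻¹ = t) ↔
          (p.1 ∈ Hsub F ℓ ∧ p.2 ∈ Hsub F ℓ ∧ (p.1:F) + 1 = (t:F) * ((p.2:F)+1))) := by
      intro p t ht
      obtain ⟨htne, htKu⟩ := mem_erase.mp ht
      have htH : t ∈ Hsub F ℓ := (hKuH t).mp htKu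
      constructor
      · rintro ⟨hpTo, hft⟩
        rw [hTo, mem_filter, hTdef, mem_filter, mem_product] at hpTo
        obtain ⟨⟨⟨h1, h2⟩, _⟩, _⟩ := hpTo
        have h1H := (hKuH _).mp h1
        have h2H := (hKuH _).mp h2
        refine ⟨h1H, h2H, ?_⟩
        have : mkU ((p.1:F)+1) = t * mkU ((p.2:F)+1) := by
          rw [← hft]; group
        have := congrArg (Units.val) this
        rwa [mkU_coe (haddne _ h1H), Units.val_mul, mkU_coe (haddne _ h2H)] at this
      · rintro ⟨h1H, h2H, heq⟩
        have hne1 : ((p.1:F) + 1) ≠ 0 := haddne _ h1H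
        have hne2 : ((p.2:F) + 1) ≠ 0 := haddne _ h2H
        have hunit : mkU ((p.1:F)+1) = t * mkU ((p.2:F)+1) := by
          apply Units.ext
          rw [mkU_coe hne1, Units.val_mul, mkU_coe hne2]
          exact heq
        have hne12 : p.1 ≠ p.2 := by
          intro h
          apply htne
          apply Units.ext
          rw [h] at heq
          have : (t:F) = 1 := by
            have h1' : (t:F) * ((p.2:F)+1) = 1 * ((p.2:F)+1) := by
              rw [one_mul]; exact heq.symm
            exact mul_right_cancel₀ hne2 h1'
          rw [this, Units.val_one]
        constructor
        · rw [hTo, mem_filter, hTdef, mem_filter, mem_product]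
          refine ⟨⟨⟨(hKuH _).mpr h1H, (hKuH _).mpr h2H⟩, ?_⟩, hne12⟩
          show π (mkU ((p.1:F)+1)) = π (mkU ((p.2:F)+1))
          rw [hunit, map_mul, (hπ1 t).mpr htH]
          exact one_mul (π (mkU ((p.2:F) + 1)))
        · rw [hunit]; group
    have hfib : To.card = ∑ t ∈ Ku.erase 1,
        (To.filter (fun p : Fˣ × Fˣ => mkU ((p.1:F)+1) * (mkU ((p.2:F)+1))⁻¹ = t)).card := by
      apply card_eq_sum_card_fiberwise
      intro p hp
      have hpTo := hp
      rw [hTo, mem_coe, mem_filter, hTdef, mem_filter, mem_product] at hp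
      obtain ⟨⟨⟨h1, h2⟩, h3⟩, h4⟩ := hp
      have h1H := (hKuH _).mp h1
      have h2H := (hKuH _).mp h2
      set u := mkU ((p.1:F)+1) with hu
      set v := mkU ((p.2:F)+1) with hv
      have h3' : π u = π v := h3
      obtain ⟨z, hzH, hz⟩ := (QuotientGroup.mk'_eq_mk' (Hsub F ℓ)).mp h3'
      have huvH : u * v⁻¹ ∈ Hsub F ℓ := by
        have hz' : z = u⁻¹ * v := by rw [← hz]; group
        have he : u * v⁻¹ = z⁻¹ := by
          rw [hz', mul_inv_rev, inv_inv]
          exact mul_comm _ _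
        rw [he]
        exact inv_mem hzH
      rw [mem_coe, mem_erase]
      refine ⟨?_, (hKuH _).mpr huvH⟩
      intro h
      apply h4
      have huv : u = v := mul_inv_eq_one.mp h
      have := congrArg (Units.val) huv
      rw [hu, hv, mkU_coe (haddne _ h1H), mkU_coe (haddne _ h2H)] at this
      exact Units.ext (by linear_combination this)
    have hfibc : ∀ t ∈ Ku.erase 1,
        (To.filter (fun p : Fˣ × Fˣ => mkU ((p.1:F)+1) * (mkU ((p.2:F)+1))⁻¹ = t)).card = lam := by
      intro t ht
      obtain ⟨htne, htKu⟩ := mem_erase.mp ht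
      have htH : t ∈ Hsub F ℓ := (hKuH t).mp htKu
      have htF1 : (t:F) ≠ 1 := by
        intro h
        exact htne (Units.ext (by rw [h, Units.val_one]))
      have hz0 : ((t:F) - 1) ≠ 0 := sub_ne_zero.mpr htF1
      rw [← hPair ((t:F) - 1) hz0]
      apply Finset.card_bij (fun (p : Fˣ × Fˣ) (_ : p ∈ _) => ((p.1 : F), (t:F) * (p.2:F)))
      · intro p hp
        rw [mem_filter] at hp
        obtain ⟨h1H, h2H, heq⟩ := (hmemTo p t ht).mp ⟨hp.1, hp.2⟩
        rw [mem_filter]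
        refine ⟨mem_univ _, coe_mem_Kset_iff.mpr h1H, ?_, by linear_combination heq⟩
        have : (t:F) * (p.2:F) = ((t * p.2 : Fˣ) : F) := by rw [Units.val_mul]
        rw [this]
        exact coe_mem_Kset_iff.mpr (mul_mem htH h2H)
      · intro a ha b hb h
        rw [Prod.mk.injEq] at h
        have h1 : a.1 = b.1 := Units.ext h.1
        have h2 : a.2 = b.2 := by
          apply Units.ext
          have := h.2
          exact mul_left_cancel₀ (Units.ne_zero t) this
        exact Prod.ext h1 h2
      · rintro ⟨a, b⟩ hab
        rw [mem_filter] at hab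
        obtain ⟨_, haK, hbK, habe⟩ := hab
        obtain ⟨ya, rfl⟩ := haK
        obtain ⟨yb, rfl⟩ := hbK
        refine ⟨(ya ^ ℓ, t⁻¹ * yb ^ ℓ), ?_, ?_⟩
        · rw [mem_filter]
          apply (hmemTo _ t ht).mpr
          refine ⟨⟨ya, rfl⟩, mul_mem (inv_mem htH) ⟨yb, rfl⟩, ?_⟩
          show ((ya^ℓ : Fˣ) : F) + 1 = (t:F) * (((t⁻¹ * yb^ℓ : Fˣ) : F) + 1)
          rw [Units.val_mul, Units.val_inv_eq_inv_val]
          have hsimp : (t:F) * (((t:F)⁻¹ * ((yb^ℓ:Fˣ):F)) + 1) = ((yb^ℓ:Fˣ):F) + (t:F) := by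
            field_simp
          rw [hsimp]
          linear_combination habe
        · rw [Prod.mk.injEq]
          refine ⟨rfl, ?_⟩
          rw [Units.val_mul, Units.val_inv_eq_inv_val, ← mul_assoc,
            mul_inv_cancel₀ (Units.ne_zero t), one_mul]
    rw [hfib, Finset.sum_congr rfl hfibc, Finset.sum_const,
      card_erase_of_mem h1Ku, smul_eq_mul]
  have hT2 : T.card = Ku.card + (Ku.card - 1) * lam := by
    rw [← Finset.card_filter_add_card_filter_not (s := T) (p := fun p : Fˣ × Fˣ => p.1 = p.2),
      hTdiag, hToff]
  -- cast everything to ℤ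
  have hsum2 : ∑ c, ((B c : ℤ) * (B c : ℤ)) = (Ku.card:ℤ) + ((Ku.card:ℤ) - 1) * (lam:ℤ) := by
    have h := hTcard.symm.trans hT2
    have := congrArg (Nat.cast : ℕ → ℤ) h
    push_cast [Nat.cast_sub hKupos] at this
    exact this
  have hsum1 : ∑ c, (B c : ℤ) = (Ku.card:ℤ) := by
    exact_mod_cast congrArg (Nat.cast : ℕ → ℤ) hsumB
  have hκZ : (Ku.card : ℤ) = (ℓ:ℤ) * (lam:ℤ) + 1 := by exact_mod_cast hκlam
  -- the key identity
  have key : ∑ c ∈ univ.erase (1 : Fˣ ⧸ Hsub F ℓ), ((B c:ℤ) - (lam:ℤ))^2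
      = (ℓ:ℤ) * (lam:ℤ) + 1 - 2 * (lam:ℤ) := by
    have e0 : ∑ c ∈ univ.erase (1 : Fˣ ⧸ Hsub F ℓ), ((B c:ℤ) - (lam:ℤ))^2
        + ((B 1:ℤ) - (lam:ℤ))^2 = ∑ c, ((B c:ℤ) - (lam:ℤ))^2 :=
      Finset.sum_erase_add _ _ (mem_univ 1)
    have e1 : ∑ c, ((B c:ℤ) - (lam:ℤ))^2
        = (∑ c, (B c:ℤ) * (B c:ℤ)) - 2 * (lam:ℤ) * (∑ c, (B c:ℤ))
          + (Fintype.card (Fˣ ⧸ Hsub F ℓ) : ℤ) * (lam:ℤ)^2 := by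
      rw [Finset.sum_congr rfl (fun c _ => (by ring :
        ((B c:ℤ) - (lam:ℤ))^2 = (B c:ℤ) * (B c:ℤ) - 2 * (lam:ℤ) * (B c:ℤ) + (lam:ℤ)^2))]
      rw [Finset.sum_add_distrib, Finset.sum_sub_distrib, Finset.sum_const, card_univ,
        ← Finset.mul_sum, nsmul_eq_mul]
    have e2 : ((B 1:ℤ) - (lam:ℤ))^2 = 0 := by rw [hB1]; ring
    rw [e2, add_zero] at e0
    rw [e0, e1, hsum1, hsum2, hQcard, hκZ]
    ring
  -- each term is 1 mod 8
  have hterm : ∀ c ∈ univ.erase (1 : Fˣ ⧸ Hsub F ℓ),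
      ((((B c:ℤ) - (lam:ℤ))^2 : ℤ) : ZMod 8) = 1 := by
    intro c hc
    have hcne := (mem_erase.mp hc).1
    have hoddt : Odd ((B c:ℤ) - (lam:ℤ)) := by
      apply Even.sub_odd
      · exact_mod_cast (even_iff_two_dvd.mpr (hBeven c hcne))
      · exact_mod_cast hlamodd
    have hdvd := aux_int_odd_sq hoddt
    have h0 : ((((B c:ℤ) - (lam:ℤ))^2 - 1 : ℤ) : ZMod 8) = 0 :=
      (ZMod.intCast_zmod_eq_zero_iff_dvd _ 8).mpr hdvd
    push_cast at h0 ⊢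
    linear_combination h0
  -- conclude mod 8
  have hcast8 : (((ℓ:ℤ) * (lam:ℤ) + 1 - 2 * (lam:ℤ) : ℤ) : ZMod 8)
      = ((univ.erase (1 : Fˣ ⧸ Hsub F ℓ)).card : ZMod 8) := by
    rw [← key, Int.cast_sum, Finset.sum_congr rfl hterm, Finset.sum_const,
      nsmul_eq_mul, mul_one]
  have hcarde : (univ.erase (1 : Fˣ ⧸ Hsub F ℓ)).card = ℓ - 1 := by
    rw [card_erase_of_mem (mem_univ 1), card_univ, hQcard]
  have hl0 : ((ℓ:ℕ) : ZMod 8) = 0 := (ZMod.natCast_eq_zero_iff ℓ 8).mpr h8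
  have final8 : ((2 * (lam:ℤ) - 2 : ℤ) : ZMod 8) = 0 := by
    have h := hcast8
    rw [hcarde] at h
    rw [Nat.cast_sub (by omega : 1 ≤ ℓ)] at h
    push_cast at h ⊢
    rw [hl0] at h
    linear_combination -h
  have hdvd8 : (8:ℤ) ∣ 2 * (lam:ℤ) - 2 := (ZMod.intCast_zmod_eq_zero_iff_dvd _ 8).mp final8
  obtain ⟨c, hc⟩ := hdvd8
  omega
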